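/- Let Z_1,…,Z_k ∈ ℝ^d satisfy the r*-spread condition around μ for some r* > 0, let x ∈ ℝ^d with ‖x − μ‖ ≥ 20·r*, and suppose y ∈ ℝ^d is a unit vector with ⟨y, (μ − x)/‖μ − x‖⟩ ≥ 1/15. Then the number of indices i ∈ {1,…,k} with ⟨Z_i − x, y⟩ > 0 is at least 0.95·k. -/

import Mathlib

noncomputable section

/-- `Z₁,…,Z_k` satisfy the `r`-spread condition around `μ`: along every unit direction `v`,
the number of indices with `⟨Z i − μ, v⟩ ≥ r` is at most `0.05·k`. -/
def SpreadCond {k D : ℕ} (Z : Fin k → EuclideanSpace ℝ (Fin D))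
    (μ : EuclideanSpace ℝ (Fin D)) (r : ℝ) : Prop :=
  ∀ v : EuclideanSpace ℝ (Fin D), ‖v‖ = 1 →
    (({i : Fin k | r ≤ (inner ℝ (Z i - μ) v : ℝ)}).ncard : ℝ) ≤ 0.05 * k

theorem stmt15 {k D : ℕ} (Z : Fin k → EuclideanSpace ℝ (Fin D))
    (μ : EuclideanSpace ℝ (Fin D)) (rstar : ℝ) (hrstar : 0 < rstar)
    (hspread : SpreadCond Z μ rstar)
    (x : EuclideanSpace ℝ (Fin D)) (hx : 20 * rstar ≤ ‖x - μ‖)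
    (y : EuclideanSpace ℝ (Fin D)) (hy : ‖y‖ = 1)
    (halign : (1 / 15 : ℝ) ≤ (inner ℝ y (‖μ - x‖⁻¹ • (μ - x)) : ℝ)) :
    (0.95 : ℝ) * k ≤
      (({i : Fin k | 0 < (inner ℝ (Z i - x) y : ℝ)}).ncard : ℝ) := by
  set A : Set (Fin k) := {i : Fin k | 0 < (inner ℝ (Z i - x) y : ℝ)}
  have hnorm : ‖μ - x‖ = ‖x - μ‖ := norm_sub_rev _ _
  have hpos : (0:ℝ) < ‖μ - x‖ := by
    rw [hnorm]; linarith
  have hμx : (4/3 : ℝ) * rstar ≤ (inner ℝ y (μ - x) : ℝ) := by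
    have h := halign
    rw [real_inner_smul_right] at h
    have : ‖μ - x‖ * (1/15) ≤ ‖μ - x‖ * (‖μ - x‖⁻¹ * (inner ℝ y (μ - x) : ℝ)) :=
      mul_le_mul_of_nonneg_left h hpos.le
    rw [← mul_assoc, mul_inv_cancel₀ hpos.ne', one_mul] at this
    nlinarith [hnorm ▸ hx]
  have hsub : Aᶜ ⊆ {i : Fin k | rstar ≤ (inner ℝ (Z i - μ) (-y) : ℝ)} := by
    intro i hi
    simp only [Set.mem_compl_iff, Set.mem_setOf_eq, A, not_lt] at hi ⊢
    have hdecomp : Z i - μ = (Z i - x) - (μ - x) := by abel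
    rw [inner_neg_right, hdecomp, inner_sub_left]
    have hsymm : (inner ℝ (μ - x) y : ℝ) = (inner ℝ y (μ - x) : ℝ) := real_inner_comm _ _
    linarith
  have hB := hspread (-y) (by rw [norm_neg, hy])
  have hAc : ((Aᶜ.ncard : ℕ) : ℝ) ≤ 0.05 * k := by
    have := Set.ncard_le_ncard hsub (Set.toFinite _)
    calc ((Aᶜ.ncard : ℕ) : ℝ) ≤ _ := Nat.cast_le.mpr this
      _ ≤ 0.05 * k := hB
  have hsum : A.ncard + Aᶜ.ncard = k := by
    rw [Set.ncard_add_ncard_compl, Nat.card_eq_fintype_card, Fintype.card_fin]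
  have : (A.ncard : ℝ) + (Aᶜ.ncard : ℝ) = k := by exact_mod_cast hsum
  linarith
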